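/- For every integer n ≥ 2 there exists an exclusive error model that is not induced by any inclusive error model: there exists a probability distribution Q on (ZMod 2)^n such that no function P from the nonzero elements of (ZMod 2)^n to [0,1] satisfies Q(f) = Σ_{S ⊆ E, Σ_{s∈S} s = f} ∏_{s∈S} P(s) ∏_{s∈E∖S} (1 − P(s)) for all f, where E is the set of nonzero elements of (ZMod 2)^n. -/

import Mathlib

open Finset

section Aux

variable {n : ℕ}

/-- Sign character on `ZMod 2`. -/
noncomputable def esign (x : ZMod 2) : ℝ := if x = 0 then 1 else -1

lemma esign_zero : esign (0 : ZMod 2) = 1 := by simp [esign]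

lemma esign_add (x y : ZMod 2) : esign (x + y) = esign x * esign y := by
  have hx : x = 0 ∨ x = 1 := by revert x; decide
  have hy : y = 0 ∨ y = 1 := by revert y; decide
  have e0 : esign (0 : ZMod 2) = 1 := esign_zero
  have e1 : esign (1 : ZMod 2) = -1 := by rw [esign, if_neg (by decide)]
  rcases hx with rfl | rfl <;> rcases hy with rfl | rfl
  · rw [add_zero, e0]; norm_num
  · rw [zero_add, e0]; norm_num
  · rw [add_zero, e0]; norm_num
  · rw [show (1 + 1 : ZMod 2) = 0 from by decide, e0, e1]; norm_num

/-- The character of `(ZMod 2)^n` indexed by `a`. -/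
noncomputable def chi (a f : Fin n → ZMod 2) : ℝ := ∏ i, esign (a i * f i)

lemma chi_zero_left (f : Fin n → ZMod 2) : chi 0 f = 1 := by
  simp [chi, esign]

lemma chi_mul_chi (a b f : Fin n → ZMod 2) : chi a f * chi b f = chi (a + b) f := by
  rw [chi, chi, chi, ← Finset.prod_mul_distrib]
  refine Finset.prod_congr rfl fun i _ => ?_
  rw [← esign_add, Pi.add_apply, add_mul]

lemma chi_add_right (a f g : Fin n → ZMod 2) : chi a (f + g) = chi a f * chi a g := by
  rw [chi, chi, chi, ← Finset.prod_mul_distrib]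
  refine Finset.prod_congr rfl fun i _ => ?_
  rw [← esign_add, Pi.add_apply, mul_add]

lemma chi_zero_right (a : Fin n → ZMod 2) : chi a 0 = 1 := by
  simp [chi, esign]

lemma chi_finset_sum (a : Fin n → ZMod 2) (S : Finset (Fin n → ZMod 2)) :
    chi a (∑ s ∈ S, s) = ∏ s ∈ S, chi a s := by
  classical
  induction S using Finset.induction_on with
  | empty => simp [chi_zero_right]
  | insert _ _ h ih =>
    rw [Finset.sum_insert h, Finset.prod_insert h, chi_add_right, ih]

lemma pi_add_eq_zero_iff (a b : Fin n → ZMod 2) : a + b = 0 ↔ a = b := by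
  constructor
  · intro h
    funext i
    have h2 : a i + b i = 0 := congrFun h i
    have : ∀ x y : ZMod 2, x + y = 0 → x = y := by decide
    exact this _ _ h2
  · rintro rfl
    funext i
    exact CharTwo.add_self_eq_zero _

lemma sum_chi (a : Fin n → ZMod 2) :
    ∑ f : Fin n → ZMod 2, chi a f = if a = 0 then (2 : ℝ) ^ n else 0 := by
  classical
  have key : (∏ i : Fin n, ∑ x : ZMod 2, esign (a i * x))
      = ∑ f : Fin n → ZMod 2, chi a f := by
    rw [Finset.prod_univ_sum (fun _ => (Finset.univ : Finset (ZMod 2)))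
      (fun i x => esign (a i * x)), Fintype.piFinset_univ]
    rfl
  rw [← key]
  have hZ : (Finset.univ : Finset (ZMod 2)) = {0, 1} := by decide
  have hsum : ∀ c : ZMod 2, ∑ x : ZMod 2, esign (c * x)
      = if c = 0 then (2 : ℝ) else 0 := by
    intro c
    have hc : c = 0 ∨ c = 1 := by revert c; decide
    rw [hZ, Finset.sum_insert (by decide), Finset.sum_singleton]
    rcases hc with rfl | rfl <;> norm_num [esign]
  by_cases ha : a = 0
  · subst ha
    rw [if_pos rfl]
    have h2 : ∀ i : Fin n, ∑ x : ZMod 2, esign ((0 : Fin n → ZMod 2) i * x) = 2 :=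
      fun i => by rw [Pi.zero_apply, hsum, if_pos rfl]
    rw [Finset.prod_congr rfl fun i _ => h2 i, Finset.prod_const]
    simp
  · obtain ⟨i, hi⟩ : ∃ i, a i ≠ 0 := by
      by_contra h
      push_neg at h
      exact ha (funext h)
    rw [if_neg ha]
    exact Finset.prod_eq_zero (Finset.mem_univ i) (by rw [hsum, if_neg hi])

lemma sum_chi_mul (a b : Fin n → ZMod 2) :
    ∑ f : Fin n → ZMod 2, chi a f * chi b f = if a = b then (2 : ℝ) ^ n else 0 := by
  classical
  have : ∀ f : Fin n → ZMod 2, chi a f * chi b f = chi (a + b) f := fun f => chi_mul_chi a b f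
  simp only [this, sum_chi, pi_add_eq_zero_iff]

lemma chi_pm (a f : Fin n → ZMod 2) : chi a f = 1 ∨ chi a f = -1 := by
  have h : chi a f * chi a f = 1 := by
    rw [chi_mul_chi]
    rw [(pi_add_eq_zero_iff a a).mpr rfl, chi_zero_left]
  exact mul_self_eq_one_iff.mp h

end Aux

/-- For every `n ≥ 2` there exists an exclusive error model (a probability
distribution `Q` on `(ZMod 2)^n`) that is not induced by any inclusive error model
`P : E → [0,1]`, where `E` is the set of nonzero elements of `(ZMod 2)^n`. -/
theorem exists_exclusive_not_inclusive (n : ℕ) (hn : 2 ≤ n) :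
    ∃ Q : (Fin n → ZMod 2) → ℝ,
      (∀ f, 0 ≤ Q f) ∧ (∑ f, Q f = 1) ∧
      ¬ ∃ P : (Fin n → ZMod 2) → ℝ,
          (∀ f : Fin n → ZMod 2, f ≠ 0 → 0 ≤ P f ∧ P f ≤ 1) ∧
          ∀ f : Fin n → ZMod 2,
            Q f = ∑ S ∈ (univ.filter fun g : Fin n → ZMod 2 => g ≠ 0).powerset.filter
                    (fun S => ∑ s ∈ S, s = f),
                  (∏ s ∈ S, P s) *
                    ∏ s ∈ (univ.filter fun g : Fin n → ZMod 2 => g ≠ 0) \ S, (1 - P s) := by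
  classical
  set i0 : Fin n := ⟨0, by omega⟩ with hi0
  set i1 : Fin n := ⟨1, by omega⟩ with hi1
  have hi01 : i0 ≠ i1 := by
    intro h
    have := congrArg Fin.val h
    simp [hi0, hi1] at this
  set a0 : Fin n → ZMod 2 := Pi.single i0 1 with ha0
  set a1 : Fin n → ZMod 2 := Pi.single i1 1 with ha1
  have ha0ne : a0 ≠ 0 := by
    intro h
    have := congrFun h i0
    simp [ha0] at this
  have ha1ne : a1 ≠ 0 := by
    intro h
    have := congrFun h i1
    simp [ha1] at this
  have ha01ne : a0 + a1 ≠ 0 := by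
    intro h
    have := congrFun h i0
    simp [ha0, ha1, Pi.single_eq_of_ne hi01] at this
  have ha0a1 : a0 ≠ a1 := by
    intro h
    have := congrFun h i0
    simp [ha0, ha1, Pi.single_eq_of_ne hi01] at this
  have hpow : (0:ℝ) < (2:ℝ)^n := by positivity
  -- the exclusive model
  set Q : (Fin n → ZMod 2) → ℝ := fun f =>
    (1 - (1/4) * chi a0 f + (1/4) * chi a1 f + (1/4) * chi (a0 + a1) f) / 2^n with hQdef
  refine ⟨Q, ?_, ?_, ?_⟩
  · -- nonnegativity
    intro f
    have h01 : chi (a0 + a1) f = chi a0 f * chi a1 f := (chi_mul_chi a0 a1 f).symm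
    rcases chi_pm a0 f with h0 | h0 <;> rcases chi_pm a1 f with h1 | h1 <;>
      · simp only [hQdef, h01, h0, h1]
        apply div_nonneg (by norm_num) hpow.le
  · -- sums to one
    have : ∑ f, Q f = (∑ f : Fin n → ZMod 2, (1:ℝ)
        - (1/4) * ∑ f : Fin n → ZMod 2, chi a0 f
        + (1/4) * ∑ f : Fin n → ZMod 2, chi a1 f
        + (1/4) * ∑ f : Fin n → ZMod 2, chi (a0 + a1) f) / 2^n := by
      simp only [hQdef]
      rw [← Finset.sum_div]
      congr 1
      rw [Finset.sum_add_distrib, Finset.sum_add_distrib, Finset.sum_sub_distrib,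
        ← Finset.mul_sum, ← Finset.mul_sum, ← Finset.mul_sum]
    rw [this, sum_chi, sum_chi, sum_chi, if_neg ha0ne, if_neg ha1ne, if_neg ha01ne]
    have hcard : ∑ f : Fin n → ZMod 2, (1:ℝ) = 2^n := by
      rw [Finset.sum_const, Finset.card_univ]
      simp [mul_comm]
    rw [hcard]
    field_simp
    ring
  · -- not induced by an inclusive model
    rintro ⟨P, hP, hQP⟩
    set E : Finset (Fin n → ZMod 2) := univ.filter fun g => g ≠ 0 with hE
    -- Fourier transform of Q under the representation
    have hhat : ∀ a : Fin n → ZMod 2,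
        ∑ f, Q f * chi a f = ∏ s ∈ E, (P s * chi a s + (1 - P s)) := by
      intro a
      have step1 : ∑ f, Q f * chi a f
          = ∑ f : Fin n → ZMod 2, ∑ S ∈ E.powerset.filter (fun S => ∑ s ∈ S, s = f),
              ((∏ s ∈ S, P s) * ∏ s ∈ E \ S, (1 - P s)) * chi a (∑ s ∈ S, s) := by
        refine Finset.sum_congr rfl fun f _ => ?_
        rw [hQP f, Finset.sum_mul]
        refine Finset.sum_congr rfl fun S hS => ?_
        rw [Finset.mem_filter] at hS
        rw [hS.2]
      rw [step1,
        Finset.sum_fiberwise E.powerset (fun S => ∑ s ∈ S, s)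
          (fun S => ((∏ s ∈ S, P s) * ∏ s ∈ E \ S, (1 - P s)) * chi a (∑ s ∈ S, s))]
      rw [Finset.prod_add]
      refine Finset.sum_congr rfl fun S hS => ?_
      rw [chi_finset_sum, Finset.prod_mul_distrib]
      ring
    -- triple product nonnegativity
    have htriple : 0 ≤ (∑ f, Q f * chi a0 f) * (∑ f, Q f * chi a1 f)
        * (∑ f, Q f * chi (a0 + a1) f) := by
      rw [hhat a0, hhat a1, hhat (a0 + a1), ← Finset.prod_mul_distrib,
        ← Finset.prod_mul_distrib]
      refine Finset.prod_nonneg fun s hs => ?_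
      have hs0 : s ≠ 0 := (Finset.mem_filter.mp hs).2
      have h01 : chi (a0 + a1) s = chi a0 s * chi a1 s := (chi_mul_chi a0 a1 s).symm
      obtain ⟨hP0, hP1⟩ := hP s hs0
      rcases chi_pm a0 s with h0 | h0 <;> rcases chi_pm a1 s with h1 | h1 <;>
        · rw [h01, h0, h1]
          nlinarith [sq_nonneg (1 - 2 * P s)]
    -- direct computation of the three Fourier coefficients
    have hkey : ∀ b : Fin n → ZMod 2, ∑ f, Q f * chi b f
        = ((if (0 : Fin n → ZMod 2) = b then (2:ℝ)^n else 0)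
          - (1/4) * (if a0 = b then (2:ℝ)^n else 0)
          + (1/4) * (if a1 = b then (2:ℝ)^n else 0)
          + (1/4) * (if a0 + a1 = b then (2:ℝ)^n else 0)) / 2^n := by
      intro b
      have expand : ∀ f : Fin n → ZMod 2, Q f * chi b f
          = (chi 0 f * chi b f - (1/4) * (chi a0 f * chi b f)
            + (1/4) * (chi a1 f * chi b f) + (1/4) * (chi (a0 + a1) f * chi b f)) / 2^n := by
        intro f
        simp only [hQdef, chi_zero_left]
        ring
      rw [Finset.sum_congr rfl fun f _ => expand f, ← Finset.sum_div]
      congr 1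
      rw [Finset.sum_add_distrib, Finset.sum_add_distrib, Finset.sum_sub_distrib,
        ← Finset.mul_sum, ← Finset.mul_sum, ← Finset.mul_sum,
        sum_chi_mul, sum_chi_mul, sum_chi_mul, sum_chi_mul]
    have hsym : ∀ x : Fin n → ZMod 2, x + x = 0 := fun x => (pi_add_eq_zero_iff x x).mpr rfl
    have hne3 : a0 + a1 ≠ a0 := by
      intro h
      apply ha1ne
      have h2 : a0 + (a0 + a1) = a0 + a0 := congrArg (a0 + ·) h
      rwa [← add_assoc, hsym a0, zero_add] at h2
    have hne4 : a0 + a1 ≠ a1 := by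
      intro h
      apply ha0ne
      have h2 : (a0 + a1) + a1 = a1 + a1 := congrArg (· + a1) h
      rwa [add_assoc, hsym a1, add_zero] at h2
    have h0 : ∑ f, Q f * chi a0 f = -(1/4) := by
      rw [hkey a0, if_neg (fun h => ha0ne h.symm), if_pos rfl,
        if_neg ha0a1.symm, if_neg hne3]
      field_simp
      ring
    have h1 : ∑ f, Q f * chi a1 f = 1/4 := by
      rw [hkey a1, if_neg (fun h => ha1ne h.symm), if_neg ha0a1, if_pos rfl, if_neg hne4]
      field_simp
      ring
    have h01 : ∑ f, Q f * chi (a0 + a1) f = 1/4 := by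
      rw [hkey (a0 + a1), if_neg (fun h => ha01ne h.symm), if_neg (fun h => hne3 h.symm),
        if_neg (fun h => hne4 h.symm), if_pos rfl]
      field_simp
      ring
    rw [h0, h1, h01] at htriple
    norm_num at htriple
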